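/- Let A be a semisimple Frobenius algebra over a commutative ring R, isomorphic to R_{λ₁} ⊕ ⋯ ⊕ R_{λₙ}. Then for every integer g ≥ 0, the invariant of the closed genus-g surface in the associated TQFT equals Σᵢ λᵢ^{g−1}. Equivalently, μ(H^g(1)) = Σᵢ λᵢ^{g−1}, where H : A → A is the genus-adding operator H(a) = m(Δ(a)). -/

import Mathlib

open TensorProduct

/-- **Closed surface invariants of a semisimple Frobenius algebra.**
Let `A` be a commutative Frobenius algebra over `R` (counit `μ`, comultiplication `Δ`)
with an orthogonal idempotent basis `e₁,…,eₙ` satisfying `μ(eᵢ) = λᵢ⁻¹` for units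
`λᵢ ∈ R`.  Then the genus-`g` closed surface invariant, `μ(H^g(1))` where
`H = m ∘ Δ` is the handle operator, equals `∑ᵢ λᵢ^{g−1}`. -/
theorem closed_invariant_semisimple
    {R A : Type*} [CommRing R] [CommRing A] [Algebra R A]
    (Δ : A →ₗ[R] A ⊗[R] A) (μ : A →ₗ[R] R)
    (hcounitR : ∀ a : A, (TensorProduct.rid R A) (TensorProduct.map LinearMap.id μ (Δ a)) = a)
    (hcounitL : ∀ a : A, (TensorProduct.lid R A) (TensorProduct.map μ LinearMap.id (Δ a)) = a)
    (hfrob : ∀ a b : A, Δ (a * b) = TensorProduct.map (LinearMap.mul' R A) LinearMap.id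
      ((TensorProduct.assoc R A A A).symm (a ⊗ₜ[R] Δ b)))
    {n : ℕ} (e : Fin n → A) (b : Module.Basis (Fin n) R A) (hb : ∀ i, b i = e i)
    (hid : ∀ i, e i * e i = e i)
    (horth : ∀ i j, i ≠ j → e i * e j = 0)
    (lam : Fin n → Rˣ) (hμ : ∀ i, μ (e i) = ((lam i)⁻¹ : Rˣ))
    (g : ℕ) :
    μ ((fun a => LinearMap.mul' R A (Δ a))^[g] 1) =
      ∑ i, ((lam i ^ ((g : ℤ) - 1) : Rˣ) : R) := by
  classical
  -- left multiplication on the first tensor factor, as a linear map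
  set L : A → (A ⊗[R] A →ₗ[R] A ⊗[R] A) := fun a =>
    (TensorProduct.map (LinearMap.mul' R A) LinearMap.id).comp
      (((TensorProduct.assoc R A A A).symm.toLinearMap).comp
        (TensorProduct.mk R A (A ⊗[R] A) a)) with hLdef
  have hLapp : ∀ (a x y : A), L a (x ⊗ₜ[R] y) = (a * x) ⊗ₜ[R] y := by
    intro a x y
    simp [hLdef, LinearMap.mul'_apply]
  have hfrob' : ∀ a b' : A, Δ (a * b') = L a (Δ b') := by
    intro a b'
    rw [hfrob]
    rfl
  set bb : Module.Basis (Fin n × Fin n) R (A ⊗[R] A) := Module.Basis.tensorProduct b b with hbb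
  have hbbapp : ∀ p : Fin n × Fin n, bb p = e p.1 ⊗ₜ[R] e p.2 := by
    intro p
    rw [hbb, ← hb p.1, ← hb p.2]
    exact Module.Basis.tensorProduct_apply' b b p
  have key2 : ∀ m k : Fin n, b.coord k (e m) = if m = k then 1 else 0 := by
    intro m k
    rw [← hb m, Module.Basis.coord_apply, b.repr_self, Finsupp.single_apply]
  -- Step: Δ (e i) = λᵢ • eᵢ ⊗ eᵢ
  have hΔ : ∀ i, Δ (e i) = ((lam i : Rˣ) : R) • (e i ⊗ₜ[R] e i) := by
    intro i
    set d : Fin n × Fin n → R := fun p => bb.repr (Δ (e i)) p with hd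
    have hexp : Δ (e i) = ∑ p : Fin n × Fin n, d p • (e p.1 ⊗ₜ[R] e p.2) := by
      conv_lhs => rw [← bb.sum_repr (Δ (e i))]
      exact Finset.sum_congr rfl fun p _ => by rw [hbbapp p]
    -- coefficients off the first diagonal index vanish
    have hA : ∀ j k : Fin n, j ≠ i → d (j, k) = 0 := by
      intro j k hji
      have h0 : L (e j) (Δ (e i)) = 0 := by
        rw [← hfrob', horth j i hji, map_zero]
      rw [hexp, map_sum] at h0
      have h0' : ∑ p : Fin n × Fin n, d p • ((e j * e p.1) ⊗ₜ[R] e p.2) = 0 := by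
        rw [← h0]
        exact Finset.sum_congr rfl fun p _ => by rw [map_smul, hLapp]
      have key : ∀ p : Fin n × Fin n,
          (bb.coord (j, k)) ((e j * e p.1) ⊗ₜ[R] e p.2) = if p = (j, k) then 1 else 0 := by
        rintro ⟨p1, p2⟩
        by_cases hpj : p1 = j
        · subst hpj
          have ht : (e p1 * e p1) ⊗ₜ[R] e p2 = bb (p1, p2) := by
            rw [hid, hbbapp]
          rw [ht, Module.Basis.coord_apply, bb.repr_self, Finsupp.single_apply]
        · rw [horth j p1 (Ne.symm hpj), TensorProduct.zero_tmul, map_zero,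
            if_neg (by simp [Prod.ext_iff]; tauto)]
      have h5 := congrArg (bb.coord (j, k)) h0'
      rw [map_sum, map_zero] at h5
      simp only [map_smul, key, smul_eq_mul, mul_ite, mul_one, mul_zero,
        Finset.sum_ite_eq', Finset.mem_univ, if_true] at h5
      exact h5
    -- counit on the left determines the diagonal coefficients
    have hB : ∀ k : Fin n, d (i, k) = if k = i then ((lam i : Rˣ) : R) else 0 := by
      intro k
      have h6 : e i = ∑ p : Fin n × Fin n, d p • (μ (e p.1) • e p.2) := by
        conv_lhs => rw [← hcounitL (e i)]
        rw [hexp, map_sum, map_sum]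
        refine Finset.sum_congr rfl fun p _ => ?_
        rw [map_smul, map_smul, TensorProduct.map_tmul, LinearMap.id_apply,
          TensorProduct.lid_tmul]
      have h7 := congrArg (b.coord k) h6
      rw [map_sum] at h7
      have h8 : ∑ p : Fin n × Fin n, (b.coord k) (d p • μ (e p.1) • e p.2)
          = d (i, k) * ((lam i)⁻¹ : Rˣ) := by
        rw [Fintype.sum_eq_single (i, k)]
        · rw [map_smul, map_smul, key2, if_pos rfl, hμ, smul_eq_mul, smul_eq_mul,
            mul_one]
        · rintro ⟨p1, p2⟩ hp
          by_cases hp1 : p1 = i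
          · have hp2 : p2 ≠ k := fun h => hp (by rw [hp1, h])
            rw [map_smul, map_smul, key2, if_neg hp2, smul_zero, smul_zero]
          · rw [hA p1 p2 hp1, zero_smul, map_zero]
      rw [h8, key2] at h7
      by_cases hk : k = i
      · rw [if_pos hk.symm] at h7
        rw [if_pos hk]
        have := congrArg (fun x => x * ((lam i : Rˣ) : R)) h7
        simpa [mul_assoc, Units.inv_mul] using this.symm
      · rw [if_neg (fun h => hk h.symm)] at h7
        rw [if_neg hk]
        have := congrArg (fun x => x * ((lam i : Rˣ) : R)) h7
        simpa [mul_assoc, Units.inv_mul] using this.symm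
    rw [hexp, Fintype.sum_eq_single (i, i)]
    · rw [show d (i, i) = ((lam i : Rˣ) : R) from by rw [hB i, if_pos rfl]]
    · rintro ⟨p1, p2⟩ hp
      by_cases h1 : p1 = i
      · have h2 : p2 ≠ i := fun h => hp (by rw [h1, h])
        have hd0 : d (p1, p2) = 0 := by rw [h1, hB p2, if_neg h2]
        rw [hd0, zero_smul]
      · rw [hA p1 p2 h1, zero_smul]
  -- 1 = ∑ eᵢ
  have hone : (1 : A) = ∑ i, e i := by
    have hc : ∀ j, b.repr 1 j = 1 := by
      intro j
      have h2 : (1 : A) = ∑ i, b.repr 1 i • b i := (b.sum_repr 1).symm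
      have h3 : e j = ∑ i, b.repr 1 i • (e j * e i) := by
        conv_lhs => rw [← mul_one (e j), h2]
        rw [Finset.mul_sum]
        exact Finset.sum_congr rfl fun i _ => by rw [mul_smul_comm, hb]
      have h4 : e j = b.repr 1 j • e j := h3.trans (by
        rw [Fintype.sum_eq_single j (fun i hi => by
          rw [horth j i (Ne.symm hi), smul_zero]), hid])
      have h5 := congrArg (b.coord j) h4
      rw [map_smul, key2, if_pos rfl, smul_eq_mul, mul_one] at h5
      exact h5.symm
    conv_lhs => rw [← b.sum_repr 1]
    exact Finset.sum_congr rfl fun i _ => by rw [hc, one_smul, hb]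
  -- the handle operator
  set H : A →ₗ[R] A := (LinearMap.mul' R A).comp Δ with hH
  have hHfun : (fun a => LinearMap.mul' R A (Δ a)) = fun a => H a := rfl
  have hHe : ∀ i, H (e i) = ((lam i : Rˣ) : R) • e i := by
    intro i
    rw [hH, LinearMap.comp_apply, hΔ i, map_smul, LinearMap.mul'_apply, hid]
  have hiter : ∀ m : ℕ, (fun a => H a)^[m] 1 = ∑ i, ((lam i : Rˣ) : R) ^ m • e i := by
    intro m
    induction m with
    | zero => simpa using hone
    | succ m ih =>
      rw [Function.iterate_succ_apply', ih]
      have : H (∑ i, ((lam i : Rˣ) : R) ^ m • e i)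
          = ∑ i, ((lam i : Rˣ) : R) ^ (m + 1) • e i := by
        rw [map_sum]
        refine Finset.sum_congr rfl fun i _ => ?_
        rw [map_smul, hHe, smul_smul, pow_succ, mul_comm]
      simpa using this
  rw [hHfun, hiter g, map_sum]
  refine Finset.sum_congr rfl fun i _ => ?_
  rw [map_smul, hμ, smul_eq_mul]
  have : ((lam i ^ ((g : ℤ) - 1) : Rˣ) : R) = ((lam i : Rˣ) : R) ^ g * ((lam i)⁻¹ : Rˣ) := by
    rw [zpow_sub_one, zpow_natCast, Units.val_mul, Units.val_pow_eq_pow_val]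
  rw [this]
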